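/- Let α ∈ (0,1] and let f : [0,∞) → ℝ be measurable and bounded. If ∫_0^t f(x)(t − x)^{α-1} dx = 0 for every t ≥ 0, then f(x) = 0 for Lebesgue-almost every x ≥ 0. -/

import Mathlib

open MeasureTheory Set intervalIntegral Function

private lemma rpowII {r : ℝ} (hr : -1 < r) (s : ℝ) :
    IntervalIntegrable (fun x => (s - x) ^ r) volume 0 s := by
  simpa using ((intervalIntegrable_rpow' hr (a := 0) (b := s)).comp_sub_left s).symm

private lemma rpowIOn {r : ℝ} (hr : -1 < r) (s : ℝ) :
    IntegrableOn (fun x : ℝ => (s - x) ^ r) (Ioo 0 s) volume := by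
  rcases le_or_gt s 0 with hs | hs
  · rw [Ioo_eq_empty (not_lt.mpr hs)]; exact integrableOn_empty
  · have h := rpowII hr s
    rw [intervalIntegrable_iff, uIoc_of_le hs.le] at h
    exact h.mono_set Ioo_subset_Ioc_self

private lemma betaII {α : ℝ} (h0 : 0 < α) (h1 : α < 1) :
    IntervalIntegrable (fun u : ℝ => (1 - u) ^ (-α) * u ^ (α - 1)) volume 0 1 := by
  have hA : IntervalIntegrable (fun u : ℝ => (1 - u) ^ (-α) * u ^ (α - 1)) volume 0 (1/2) := by
    apply IntervalIntegrable.continuousOn_mul (intervalIntegrable_rpow' (by linarith))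
    apply ContinuousOn.rpow_const (by fun_prop)
    intro x hx
    rw [uIcc_of_le (by norm_num)] at hx
    left; have := hx.2; intro hc; rw [sub_eq_zero] at hc; rw [← hc] at this; norm_num at this
  have hB : IntervalIntegrable (fun u : ℝ => (1 - u) ^ (-α) * u ^ (α - 1)) volume (1/2) 1 := by
    apply IntervalIntegrable.mul_continuousOn
    · have hb := ((intervalIntegrable_rpow' (show (-1:ℝ) < -α by linarith)
        (a := 0) (b := 1/2)).comp_sub_left 1).symm
      rw [show (1:ℝ) - 1/2 = 1/2 by norm_num, sub_zero] at hb
      exact hb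
    · apply ContinuousOn.rpow_const (f := fun x : ℝ => x) (by fun_prop)
      intro x hx
      rw [uIcc_of_le (by norm_num)] at hx
      left; have := hx.1; intro hc; rw [hc] at this; norm_num at this
  exact hA.trans hB

private lemma betaPos {α : ℝ} (h0 : 0 < α) (h1 : α < 1) :
    0 < ∫ u in (0:ℝ)..1, (1 - u) ^ (-α) * u ^ (α - 1) := by
  apply intervalIntegral_pos_of_pos_on (betaII h0 h1)
  · intro x hx
    exact mul_pos (Real.rpow_pos_of_pos (by linarith [hx.2]) _) (Real.rpow_pos_of_pos hx.1 _)
  · norm_num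

private lemma innerInt {α : ℝ} (h0 : 0 < α) {x t : ℝ} (hxt : x < t) :
    ∫ s in x..t, (t - s) ^ (-α) * (s - x) ^ (α - 1)
      = ∫ u in (0:ℝ)..1, (1 - u) ^ (-α) * u ^ (α - 1) := by
  set c := t - x with hc
  have hc0 : 0 < c := by simp only [hc]; linarith
  have e1 : ∀ v : ℝ, t - (v + x) = c - v := by intro v; simp only [hc]; ring
  have e2 : ∀ v : ℝ, v + x - x = v := by intro v; ring
  have step1 : ∫ s in x..t, (t - s) ^ (-α) * (s - x) ^ (α - 1)
      = ∫ v in (0:ℝ)..c, (c - v) ^ (-α) * v ^ (α - 1) := by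
    have e := integral_comp_add_right (a := (0:ℝ)) (b := c)
      (f := fun s => (t - s) ^ (-α) * (s - x) ^ (α - 1)) x
    have ect : c + x = t := by simp only [hc]; ring
    simp only [zero_add, e1, e2, ect] at e
    exact e.symm
  have step2 : ∫ v in (0:ℝ)..c, (c - v) ^ (-α) * v ^ (α - 1)
      = c * ∫ u in (0:ℝ)..1, (c - u * c) ^ (-α) * (u * c) ^ (α - 1) := by
    have e := mul_integral_comp_mul_right (a := (0:ℝ)) (b := 1)
      (f := fun v => (c - v) ^ (-α) * v ^ (α - 1)) c
    simp only [zero_mul, one_mul] at e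
    rw [← e]
  have hpt : ∀ u ∈ uIcc (0:ℝ) 1, (c - u * c) ^ (-α) * (u * c) ^ (α - 1)
      = c⁻¹ * ((1 - u) ^ (-α) * u ^ (α - 1)) := by
    intro u hu
    rw [uIcc_of_le (by norm_num)] at hu
    have h1u : (0:ℝ) ≤ 1 - u := by linarith [hu.2]
    have ea : c - u * c = c * (1 - u) := by ring
    have eb : u * c = c * u := mul_comm _ _
    rw [ea, eb, Real.mul_rpow hc0.le h1u, Real.mul_rpow hc0.le hu.1]
    have e3 : c ^ (-α) * c ^ (α - 1) = c⁻¹ := by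
      rw [← Real.rpow_add hc0, show -α + (α - 1) = -1 by ring, Real.rpow_neg_one]
    calc c ^ (-α) * (1 - u) ^ (-α) * (c ^ (α - 1) * u ^ (α - 1))
        = (c ^ (-α) * c ^ (α - 1)) * ((1 - u) ^ (-α) * u ^ (α - 1)) := by ring
      _ = c⁻¹ * ((1 - u) ^ (-α) * u ^ (α - 1)) := by rw [e3]
  rw [step1, step2, integral_congr hpt, intervalIntegral.integral_const_mul, ← mul_assoc,
    mul_inv_cancel₀ (ne_of_gt hc0), one_mul]

private lemma intOnIoc {f : ℝ → ℝ} (hf : Measurable f) {C : ℝ} (hbd : ∀ x, |f x| ≤ C)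
    (a b : ℝ) : IntegrableOn f (Ioc a b) volume := by
  have : IsFiniteMeasure (volume.restrict (Ioc a b)) :=
    ⟨by rw [Measure.restrict_apply_univ]; exact measure_Ioc_lt_top⟩
  exact Integrable.mono' (integrable_const C) hf.aestronglyMeasurable
    (ae_of_all _ fun x => by simpa using hbd x)

private lemma key1 {α : ℝ} (h0 : 0 < α) (h1 : α < 1) (f : ℝ → ℝ) (hf : Measurable f)
    (C : ℝ) (hC : 0 ≤ C) (hbd : ∀ x, |f x| ≤ C)
    (h : ∀ t, 0 ≤ t → ∫ x in (0:ℝ)..t, f x * (t - x) ^ (α - 1) = 0)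
    (t : ℝ) (ht : 0 ≤ t) : ∫ x in Ioc (0:ℝ) t, f x = 0 := by
  rcases eq_or_lt_of_le ht with rfl | ht
  · simp
  set B := ∫ u in (0:ℝ)..1, (1 - u) ^ (-α) * u ^ (α - 1) with hB
  have hBpos := betaPos h0 h1
  set μ := volume.restrict (Ioc (0:ℝ) t) with hμ
  set K : ℝ → ℝ → ℝ :=
    fun s x => if x < s then (t - s) ^ (-α) * (f x * (s - x) ^ (α - 1)) else 0 with hK
  have hKm : Measurable (uncurry K) := by
    apply Measurable.ite (measurableSet_lt measurable_snd measurable_fst) <;> fun_prop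
  have hKind : ∀ s, (fun x => K s x)
      = (Iio s).indicator (fun x => (t - s) ^ (-α) * (f x * (s - x) ^ (α - 1))) := by
    intro s; funext x; simp [hK, indicator_apply, mem_Iio]
  have hsec : ∀ s, Integrable (fun x => K s x) μ := by
    intro s
    rw [hKind s]
    apply IntegrableOn.integrable_indicator _ measurableSet_Iio
    rw [IntegrableOn, hμ, Measure.restrict_restrict measurableSet_Iio]
    apply Integrable.const_mul
    apply Integrable.bdd_mul (c := C) _ hf.aestronglyMeasurable (ae_of_all _ fun x => by simpa using hbd x)
    have hsub : Iio s ∩ Ioc 0 t ⊆ Ioo 0 s := fun y hy => ⟨hy.2.1, hy.1⟩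
    exact (rpowIOn (by linarith) s).mono_set hsub
  have hGind : ∀ (c : ℝ) (s : ℝ), Integrable
      ((Iio s).indicator (fun x => (t - s) ^ (-α) * (c * (s - x) ^ (α - 1)))) μ := by
    intro c s
    apply IntegrableOn.integrable_indicator _ measurableSet_Iio
    rw [IntegrableOn, hμ, Measure.restrict_restrict measurableSet_Iio]
    apply Integrable.const_mul
    apply Integrable.const_mul
    have hsub : Iio s ∩ Ioc 0 t ⊆ Ioo 0 s := fun y hy => ⟨hy.2.1, hy.1⟩
    exact (rpowIOn (by linarith) s).mono_set hsub
  have hset1 : ∀ s ∈ Ioc (0:ℝ) t, Iio s ∩ Ioc 0 t = Ioo 0 s := by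
    intro s hs; ext y
    simp only [mem_inter_iff, mem_Iio, mem_Ioc, mem_Ioo]
    constructor
    · rintro ⟨h1y, h2y, _⟩; exact ⟨h2y, h1y⟩
    · rintro ⟨h1y, h2y⟩; exact ⟨h2y, h1y, by linarith [hs.2]⟩
  have hIoo : ∀ s : ℝ, 0 < s → ∫ x in Ioo (0:ℝ) s, (s - x) ^ (α - 1) = s ^ α / α := by
    intro s hs0
    rw [← integral_Ioc_eq_integral_Ioo, ← intervalIntegral.integral_of_le hs0.le,
      intervalIntegral.integral_comp_sub_left (fun v => v ^ (α - 1)) s]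
    simp only [sub_zero, sub_self]
    rw [integral_rpow (Or.inl (by linarith)), show α - 1 + 1 = α by ring,
      Real.zero_rpow (ne_of_gt h0)]
    simp
  have hnormbd : ∀ s ∈ Ioc (0:ℝ) t,
      (∫ x, ‖K s x‖ ∂μ) ≤ (C * (t ^ α / α)) * (t - s) ^ (-α) := by
    intro s hs
    have hs0 : 0 < s := hs.1
    have hst : s ≤ t := hs.2
    have hts : (0:ℝ) ≤ t - s := by linarith
    have hbnd : ∀ x, ‖K s x‖
        ≤ (Iio s).indicator (fun x => (t - s) ^ (-α) * (C * (s - x) ^ (α - 1))) x := by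
      intro x
      rw [congrFun (hKind s) x, norm_indicator_eq_indicator_norm]
      rcases le_or_gt s x with hx | hx
      · simp [indicator_apply, not_lt.2 hx, mem_Iio]
      · simp only [indicator_apply, mem_Iio, hx, if_true]
        rw [Real.norm_eq_abs, abs_mul, abs_mul,
          abs_of_nonneg (Real.rpow_nonneg hts _),
          abs_of_nonneg (Real.rpow_nonneg (by linarith : (0:ℝ) ≤ s - x) _)]
        have := hbd x
        have h2 := Real.rpow_nonneg (by linarith : (0:ℝ) ≤ s - x) (α - 1)
        have h3 := Real.rpow_nonneg hts (-α)
        exact mul_le_mul_of_nonneg_left (mul_le_mul_of_nonneg_right this h2) h3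
    calc (∫ x, ‖K s x‖ ∂μ)
        ≤ ∫ x, (Iio s).indicator (fun x => (t - s) ^ (-α) * (C * (s - x) ^ (α - 1))) x ∂μ :=
          integral_mono (hsec s).norm (hGind C s) hbnd
      _ = (t - s) ^ (-α) * (C * (s ^ α / α)) := by
          rw [MeasureTheory.integral_indicator measurableSet_Iio, hμ,
            Measure.restrict_restrict measurableSet_Iio, hset1 s hs,
            MeasureTheory.integral_const_mul, MeasureTheory.integral_const_mul, hIoo s hs0]
      _ ≤ (C * (t ^ α / α)) * (t - s) ^ (-α) := by
          have hcc : C * (s ^ α / α) ≤ C * (t ^ α / α) := by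
            gcongr
            all_goals exact Real.rpow_le_rpow hs0.le hst h0.le
          rw [mul_comm]
          exact mul_le_mul_of_nonneg_right hcc (Real.rpow_nonneg hts _)
  have hbddInt : Integrable (fun s => (C * (t ^ α / α)) * (t - s) ^ (-α)) μ := by
    have hii : IntervalIntegrable (fun s : ℝ => (t - s) ^ (-α)) volume 0 t :=
      rpowII (by linarith) t
    rw [intervalIntegrable_iff, uIoc_of_le ht.le] at hii
    exact hii.const_mul _
  have hKint : Integrable (uncurry K) (μ.prod μ) := by
    rw [integrable_prod_iff hKm.aestronglyMeasurable]
    constructor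
    · exact ae_of_all _ hsec
    · apply Integrable.mono' hbddInt hKm.aestronglyMeasurable.norm.integral_prod_right'
      filter_upwards [ae_restrict_mem measurableSet_Ioc] with s hs
      rw [Real.norm_eq_abs, abs_of_nonneg (integral_nonneg fun x => norm_nonneg _)]
      exact hnormbd s hs
  have hswap := integral_integral_swap (f := K) hKint
  have hLHS : ∫ s, (∫ x, K s x ∂μ) ∂μ = 0 := by
    apply integral_eq_zero_of_ae
    filter_upwards [ae_restrict_mem measurableSet_Ioc] with s hs
    have hs0 : 0 < s := hs.1
    rw [hKind s, MeasureTheory.integral_indicator measurableSet_Iio, hμ,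
      Measure.restrict_restrict measurableSet_Iio, hset1 s hs, MeasureTheory.integral_const_mul,
      ← integral_Ioc_eq_integral_Ioo, ← intervalIntegral.integral_of_le hs0.le,
      h s hs0.le, mul_zero]
    rfl
  have hne : ∀ᵐ x ∂μ, x ≠ t := by
    rw [hμ]
    apply ae_restrict_of_ae
    have hvt : volume ({t} : Set ℝ) = 0 := Real.volume_singleton
    filter_upwards [measure_eq_zero_iff_ae_notMem.mp hvt] with x hx
    simpa using hx
  have hRHS : ∫ x, (∫ s, K s x ∂μ) ∂μ = (∫ x in Ioc (0:ℝ) t, f x) * B := by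
    have hcongr : ∀ᵐ x ∂μ, (∫ s, K s x ∂μ) = f x * B := by
      filter_upwards [ae_restrict_mem measurableSet_Ioc, hne] with x hx hxt
      have hx0 : 0 < x := hx.1
      have hxlt : x < t := lt_of_le_of_ne hx.2 hxt
      have hfun : (fun s => K s x)
          = (Ioi x).indicator (fun s => (t - s) ^ (-α) * (f x * (s - x) ^ (α - 1))) := by
        funext s; simp [hK, indicator_apply, mem_Ioi]
      have hset2 : Ioi x ∩ Ioc 0 t = Ioc x t := by
        ext y
        simp only [mem_inter_iff, mem_Ioi, mem_Ioc]
        constructor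
        · rintro ⟨h1y, _, h3y⟩; exact ⟨h1y, h3y⟩
        · rintro ⟨h1y, h2y⟩; exact ⟨h1y, by linarith, h2y⟩
      rw [hfun, MeasureTheory.integral_indicator measurableSet_Ioi, hμ,
        Measure.restrict_restrict measurableSet_Ioi, hset2,
        ← intervalIntegral.integral_of_le hxlt.le]
      have : ∀ s : ℝ, (t - s) ^ (-α) * (f x * (s - x) ^ (α - 1))
          = f x * ((t - s) ^ (-α) * (s - x) ^ (α - 1)) := fun s => by ring
      simp only [this]
      rw [intervalIntegral.integral_const_mul, innerInt h0 hxlt]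
    rw [integral_congr_ae hcongr, MeasureTheory.integral_mul_const]
  have : (∫ x in Ioc (0:ℝ) t, f x) * B = 0 := by rw [← hRHS, ← hswap, hLHS]
  rcases mul_eq_zero.mp this with h' | h'
  · exact h'
  · exact absurd h' (ne_of_gt hBpos)

private lemma key2 (f : ℝ → ℝ) (hf : Measurable f) (C : ℝ) (hC : 0 ≤ C)
    (hbd : ∀ x, |f x| ≤ C)
    (h : ∀ t, 0 ≤ t → ∫ x in Ioc (0:ℝ) t, f x = 0) :
    ∀ᵐ x ∂(volume.restrict (Ici (0:ℝ))), f x = 0 := by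
  set g : ℝ → ℝ := fun x => if 0 < x then f x else 0 with hg
  have hgm : Measurable g := Measurable.ite measurableSet_Ioi hf measurable_const
  have hgbd : ∀ x, |g x| ≤ C := by
    intro x; simp only [hg]; split
    · exact hbd x
    · simpa using hC
  have hgIoc : ∀ a b : ℝ, IntegrableOn g (Ioc a b) volume := intOnIoc hgm hgbd
  have hgint : ∀ a b : ℝ, a < b → ∫ x in Ioc a b, g x = 0 := by
    intro a b hab
    rcases le_or_gt b 0 with hb | hb
    · apply integral_eq_zero_of_ae
      filter_upwards [ae_restrict_mem measurableSet_Ioc] with x hx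
      simp only [hg, Pi.zero_apply]
      rw [if_neg (by push_neg; linarith [hx.2])]
    · set a' := max a 0 with ha'
      have ha0 : 0 ≤ a' := le_max_right a 0
      have ha'b : a' ≤ b := max_le hab.le hb.le
      have hsplit : Ioc a b = Ioc a a' ∪ Ioc a' b := (Ioc_union_Ioc_eq_Ioc (le_max_left a 0) ha'b).symm
      have hdisj : Disjoint (Ioc a a') (Ioc a' b) := (Ioc_disjoint_Ioc_of_le le_rfl)
      have h1 : ∫ x in Ioc a a', g x = 0 := by
        apply integral_eq_zero_of_ae
        filter_upwards [ae_restrict_mem measurableSet_Ioc] with x hx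
        rcases le_or_gt a 0 with ha | ha
        · have hx2 : x ≤ 0 := by rw [ha', max_eq_right ha] at hx; exact hx.2
          simp only [hg, Pi.zero_apply]
          rw [if_neg (not_lt.mpr hx2)]
        · exfalso
          rw [ha', max_eq_left ha.le] at hx
          exact absurd hx.1 (not_lt.mpr hx.2)
      have h2 : ∫ x in Ioc a' b, g x = 0 := by
        have hEq : EqOn g f (Ioc a' b) := fun x hx => if_pos (lt_of_le_of_lt ha0 hx.1)
        rw [setIntegral_congr_fun measurableSet_Ioc hEq]
        have hsplit2 : Ioc (0:ℝ) b = Ioc 0 a' ∪ Ioc a' b := (Ioc_union_Ioc_eq_Ioc ha0 ha'b).symm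
        have hint : IntegrableOn f (Ioc (0:ℝ) b) volume := intOnIoc hf hbd 0 b
        have hsub1 : Ioc (0:ℝ) a' ⊆ Ioc 0 b := Ioc_subset_Ioc le_rfl ha'b
        have hsub2 : Ioc a' b ⊆ Ioc (0:ℝ) b := Ioc_subset_Ioc ha0 le_rfl
        have e := setIntegral_union (μ := volume) (f := f) (Ioc_disjoint_Ioc_of_le le_rfl)
          measurableSet_Ioc (hint.mono_set hsub1) (hint.mono_set hsub2)
        rw [← hsplit2, h b hb.le, h a' ha0] at e
        linarith [e]
      rw [hsplit, setIntegral_union hdisj measurableSet_Ioc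
        (hgIoc a a') (hgIoc a' b), h1, h2, add_zero]
  -- measure extension
  set ν1 := volume.withDensity (fun x => ENNReal.ofReal (g x)) with hν1
  set ν2 := volume.withDensity (fun x => ENNReal.ofReal (-g x)) with hν2
  have hm1 : Measurable fun x => ENNReal.ofReal (g x) := ENNReal.measurable_ofReal.comp hgm
  have hm2 : Measurable fun x => ENNReal.ofReal (-g x) := ENNReal.measurable_ofReal.comp hgm.neg
  have hfin : ∀ (F : ℝ → ℝ), (∀ x, |F x| ≤ C) → ∀ a b : ℝ,
      (∫⁻ x in Ioc a b, ENNReal.ofReal (F x)) ≠ ⊤ := by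
    intro F hF a b
    have : (∫⁻ x in Ioc a b, ENNReal.ofReal (F x)) ≤ ENNReal.ofReal C * volume (Ioc a b) := by
      rw [← setLIntegral_const]
      apply setLIntegral_mono measurable_const
      intro x _
      exact ENNReal.ofReal_le_ofReal (le_trans (le_abs_self _) (hF x))
    exact ne_top_of_le_ne_top (ENNReal.mul_ne_top ENNReal.ofReal_ne_top measure_Ioc_lt_top.ne) this
  have heq : ν1 = ν2 := by
    apply Measure.ext_of_Ioc' ν1 ν2
    · intro a b hab
      rw [hν1, withDensity_apply _ measurableSet_Ioc]
      exact hfin g hgbd a b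
    · intro a b hab
      rw [hν1, hν2, withDensity_apply _ measurableSet_Ioc, withDensity_apply _ measurableSet_Ioc]
      have hInt : Integrable g (volume.restrict (Ioc a b)) := hgIoc a b
      have e := integral_eq_lintegral_pos_part_sub_lintegral_neg_part hInt
      rw [hgint a b hab] at e
      have hA := hfin g hgbd a b
      have hB' := hfin (fun x => -g x) (fun x => by simpa using hgbd x) a b
      have : (∫⁻ x in Ioc a b, ENNReal.ofReal (g x)).toReal
          = (∫⁻ x in Ioc a b, ENNReal.ofReal (-g x)).toReal := by linarith [e]
      exact (ENNReal.toReal_eq_toReal_iff' hA hB').mp this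
  have hae : (fun x => ENNReal.ofReal (g x)) =ᵐ[(volume : Measure ℝ)]
      (fun x => ENNReal.ofReal (-g x)) :=
    (withDensity_eq_iff_of_sigmaFinite hm1.aemeasurable hm2.aemeasurable).mp heq
  have hg0 : ∀ᵐ x ∂(volume : Measure ℝ), g x = 0 := by
    filter_upwards [hae] with x hx
    rcases le_or_gt (g x) 0 with hle | hlt
    · have : ENNReal.ofReal (g x) = 0 := ENNReal.ofReal_eq_zero.mpr hle
      rw [this] at hx
      have := ENNReal.ofReal_eq_zero.mp hx.symm
      linarith
    · have : ENNReal.ofReal (-g x) = 0 := ENNReal.ofReal_eq_zero.mpr (by linarith)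
      rw [this] at hx
      have := ENNReal.ofReal_eq_zero.mp hx
      linarith
  have hne0 : ∀ᵐ x ∂(volume.restrict (Ici (0:ℝ))), x ≠ 0 := by
    apply ae_restrict_of_ae
    have hvt : volume ({(0:ℝ)} : Set ℝ) = 0 := Real.volume_singleton
    filter_upwards [measure_eq_zero_iff_ae_notMem.mp hvt] with x hx
    simpa using hx
  filter_upwards [ae_restrict_of_ae hg0, hne0, ae_restrict_mem measurableSet_Ici]
    with x h1 h2 h3
  have hx0 : 0 < x := lt_of_le_of_ne h3 (Ne.symm h2)
  simp only [hg] at h1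
  rwa [if_pos hx0] at h1

theorem stmt2 (α : ℝ) (hα : α ∈ Ioc (0 : ℝ) 1)
    (f : ℝ → ℝ) (hf : Measurable f)
    (C : ℝ) (hbd : ∀ x, 0 ≤ x → |f x| ≤ C)
    (h : ∀ t, 0 ≤ t → ∫ x in (0 : ℝ)..t, f x * (t - x) ^ (α - 1) = 0) :
    ∀ᵐ x ∂(volume.restrict (Ici (0 : ℝ))), f x = 0 := by
  have hC : 0 ≤ C := le_trans (abs_nonneg _) (hbd 0 le_rfl)
  set f' : ℝ → ℝ := fun x => if 0 ≤ x then f x else 0 with hf'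
  have hf'm : Measurable f' := Measurable.ite measurableSet_Ici hf measurable_const
  have hf'bd : ∀ x, |f' x| ≤ C := by
    intro x; simp only [hf']; split
    · exact hbd x (by assumption)
    · simpa using hC
  have h' : ∀ t, 0 ≤ t → ∫ x in (0:ℝ)..t, f' x * (t - x) ^ (α - 1) = 0 := by
    intro t ht
    have ht' := h t ht
    rw [intervalIntegral.integral_of_le ht] at ht' ⊢
    exact (setIntegral_congr_fun measurableSet_Ioc
      (fun x hx => by simp only [hf', if_pos hx.1.le])).trans ht'
  have hioc : ∀ t, 0 ≤ t → ∫ x in Ioc (0:ℝ) t, f' x = 0 := by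
    rcases eq_or_lt_of_le hα.2 with h1 | h1
    · intro t ht
      have := h' t ht
      rw [h1] at this
      simp only [sub_self, Real.rpow_zero, mul_one] at this
      rwa [intervalIntegral.integral_of_le ht] at this
    · exact key1 hα.1 h1 f' hf'm C hC hf'bd h'
  have := key2 f' hf'm C hC hf'bd hioc
  filter_upwards [this, ae_restrict_mem measurableSet_Ici] with x h1 h2
  simp only [hf'] at h1
  rwa [if_pos (show (0:ℝ) ≤ x from h2)] at h1
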